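/- One has ∫_Ω q̄(x)·(1 − 2x₁ − |x₂| − |x₃|)·𝟙_{x₁ ≥ 0}(x) dx = 0, where 𝟙_{x₁ ≥ 0} is the indicator function of the half-space {x₁ ≥ 0}. (This is the orthogonality of q̄ to the first divergence component of the edge bubble of the edge [(0,0,0),(1,0,0)] of the basic partition of the octahedron.) -/
import Mathlib

open MeasureTheory

noncomputable def refl1 : EuclideanSpace ℝ (Fin 3) ≃ₗᵢ[ℝ] EuclideanSpace ℝ (Fin 3) :=
  LinearIsometryEquiv.piLpCongrRight 2
    (fun i => if i = 1 then LinearIsometryEquiv.neg ℝ else LinearIsometryEquiv.refl ℝ ℝ)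

lemma refl1_apply (x : EuclideanSpace ℝ (Fin 3)) (i : Fin 3) :
    refl1 x i = if i = 1 then -(x i) else x i := by
  simp only [refl1, LinearIsometryEquiv.piLpCongrRight_apply]
  by_cases h : i = 1
  · subst h; simp
  · simp [h]

/-- On the open regular octahedron `Ω ⊂ ℝ³`, the checkerboard
pressure `q̄` is orthogonal to `(1 - 2x₁ - |x₂| - |x₃|) 𝟙_{x₁ ≥ 0}`, the first
divergence component of the edge bubble of the edge `[(0,0,0),(1,0,0)]`. -/
theorem stmt_9 (Ω : Set (EuclideanSpace ℝ (Fin 3)))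
    (hΩ : Ω = {x : EuclideanSpace ℝ (Fin 3) | |x 0| + |x 1| + |x 2| < 1})
    (qbar : EuclideanSpace ℝ (Fin 3) → ℝ)
    (hq : qbar = fun x => Real.sign (x 0) * Real.sign (x 1) * Real.sign (x 2)) :
    ∫ x in Ω, qbar x * ((1 - 2 * x 0 - |x 1| - |x 2|) *
        Set.indicator {y : EuclideanSpace ℝ (Fin 3) | 0 ≤ y 0} (fun _ => (1 : ℝ)) x)
      ∂volume = 0 := by
  set g : EuclideanSpace ℝ (Fin 3) → ℝ := fun x =>
    qbar x * ((1 - 2 * x 0 - |x 1| - |x 2|) *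
      Set.indicator {y : EuclideanSpace ℝ (Fin 3) | 0 ≤ y 0} (fun _ => (1 : ℝ)) x) with hg
  set f : EuclideanSpace ℝ (Fin 3) → ℝ := Set.indicator Ω g with hf
  have hΩmeas : MeasurableSet Ω := by
    rw [hΩ]
    exact measurableSet_lt (by fun_prop) measurable_const
  have h1 : (∫ x in Ω, g x ∂volume) = ∫ x, f x ∂volume := by
    rw [hf, integral_indicator hΩmeas]
  rw [h1]
  have hmp : MeasurePreserving (refl1) (volume) (volume) := refl1.measurePreserving
  have hcomp : (∫ x, f x ∂volume) = ∫ x, f (refl1 x) ∂volume :=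
    (hmp.integral_comp refl1.toHomeomorph.measurableEmbedding f).symm
  have hodd : ∀ x, f (refl1 x) = - f x := by
    intro x
    have e0 : refl1 x 0 = x 0 := by rw [refl1_apply]; simp
    have e1 : refl1 x 1 = -(x 1) := by rw [refl1_apply]; simp
    have e2 : refl1 x 2 = x 2 := by
      rw [refl1_apply]
      simp [show (2 : Fin 3) ≠ 1 by decide]
    have hmem : refl1 x ∈ Ω ↔ x ∈ Ω := by
      rw [hΩ]; simp [e0, e1, e2, abs_neg]
    by_cases hx : x ∈ Ω
    · rw [hf, Set.indicator_of_mem (hmem.mpr hx), Set.indicator_of_mem hx]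
      have hind : Set.indicator {y : EuclideanSpace ℝ (Fin 3) | 0 ≤ y 0}
          (fun _ => (1 : ℝ)) (refl1 x) = Set.indicator {y : EuclideanSpace ℝ (Fin 3) | 0 ≤ y 0}
          (fun _ => (1 : ℝ)) x := by
        by_cases h0 : (0 : ℝ) ≤ x 0
        · rw [Set.indicator_of_mem (show x ∈ {y : EuclideanSpace ℝ (Fin 3) | 0 ≤ y 0} from h0),
            Set.indicator_of_mem
              (show refl1 x ∈ {y : EuclideanSpace ℝ (Fin 3) | 0 ≤ y 0} by
                simpa [Set.mem_setOf_eq, e0] using h0)]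
        · rw [Set.indicator_of_notMem
              (show x ∉ {y : EuclideanSpace ℝ (Fin 3) | 0 ≤ y 0} from h0),
            Set.indicator_of_notMem
              (show refl1 x ∉ {y : EuclideanSpace ℝ (Fin 3) | 0 ≤ y 0} by
                simpa [Set.mem_setOf_eq, e0] using h0)]
      rw [hg]
      simp only [hq, e0, e1, e2, abs_neg, Real.sign_neg, hind]
      ring
    · rw [hf, Set.indicator_of_notMem (fun h => hx (hmem.mp h)),
        Set.indicator_of_notMem hx, neg_zero]
  have hz : (∫ x, f x ∂volume) = - ∫ x, f x ∂volume := by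
    calc (∫ x, f x ∂volume) = ∫ x, f (refl1 x) ∂volume := hcomp
    _ = ∫ x, - f x ∂volume := by simp_rw [hodd]
    _ = - ∫ x, f x ∂volume := integral_neg f
  linarith
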